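/- The theta identity q·[-q^2;q^{16}]_∞ - [-q^6;q^{16}]_∞ = -[q^2,q^4,q^4,q^6,q^8;q^{16}]_∞ · J_1 J_{16} / J_2^2 holds, where [a;q]_∞ = (a;q)_∞ (q/a;q)_∞ and J_m = (q^m;q^m)_∞. -/

import Mathlib

open scoped BigOperators

open Complex Finset Topology Filter

/-- The q-Pochhammer infinite product (a;q)_∞ = ∏_{n≥0} (1 - a qⁿ). -/
noncomputable def qpoch (a q : ℂ) : ℂ := ∏' n : ℕ, (1 - a * q ^ n)

/-- The theta-like product [a;q]_∞ = (a;q)_∞ (q/a;q)_∞. -/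
noncomputable def jac (a q : ℂ) : ℂ := qpoch a q * qpoch (q / a) q

/-- J_m = (q^m;q^m)_∞. -/
noncomputable def Jm (m : ℕ) (q : ℂ) : ℂ := qpoch (q ^ m) (q ^ m)

/-- Ramanujan's theta function φ(q) = ∑_{n∈ℤ} q^{n²}. -/
noncomputable def phiT (q : ℂ) : ℂ := ∑' n : ℤ, q ^ (n ^ 2)

/-- Ramanujan's theta function ψ(q) = ∑_{n≥0} q^{n(n+1)/2}. -/
noncomputable def psiT (q : ℂ) : ℂ := ∑' n : ℕ, q ^ (n * (n + 1) / 2)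

/-- The Lambert-type series X(a;q). -/
noncomputable def XL (a q : ℂ) : ℂ :=
  ∑' n : ℕ, (a * q ^ n / (1 - a * q ^ n) - (q ^ (n + 1) / a) / (1 - q ^ (n + 1) / a))

section machinery

variable {a Q : ℂ}

lemma term_norm_lt (ha : ‖a‖ < 1) (hQ : ‖Q‖ < 1) (n : ℕ) : ‖a * Q ^ n‖ < 1 := by
  rw [norm_mul, norm_pow]
  calc ‖a‖ * ‖Q‖ ^ n ≤ ‖a‖ * 1 := by
        refine mul_le_mul_of_nonneg_left ?_ (norm_nonneg a)
        exact pow_le_one₀ (norm_nonneg Q) hQ.le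
    _ = ‖a‖ := mul_one _
    _ < 1 := ha

lemma term_ne_zero (ha : ‖a‖ < 1) (hQ : ‖Q‖ < 1) (n : ℕ) : 1 - a * Q ^ n ≠ 0 := by
  intro h
  have h1 : (1 : ℂ) = a * Q ^ n := by linear_combination h
  have h2 := term_norm_lt ha hQ n
  rw [← h1] at h2
  simp at h2

lemma summable_aux (hQ : ‖Q‖ < 1) : Summable (fun n : ℕ => a * Q ^ n) :=
  (summable_geometric_of_norm_lt_one hQ).mul_left a

lemma summable_log_qpoch (ha : ‖a‖ < 1) (hQ : ‖Q‖ < 1) :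
    Summable (fun n : ℕ => Complex.log (1 - a * Q ^ n)) := by
  have hs : Summable (fun n : ℕ => (3/2 : ℝ) * ‖a * Q ^ n‖) :=
    (((summable_geometric_of_norm_lt_one hQ).mul_left a).norm).mul_left _
  refine hs.of_norm_bounded_eventually ?_
  have h2 : ∀ᶠ n in Filter.cofinite, ‖a * Q ^ n‖ ≤ 1/2 := by
    by_cases hQ0 : Q = 0
    · refine Filter.eventually_of_mem (by simp : ({0}ᶜ : Set ℕ) ∈ Filter.cofinite) ?_
      intro n hn
      have hn' : n ≠ 0 := hn
      simp [hQ0, zero_pow hn']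
    · have h3 := ((summable_aux (a := a) hQ).tendsto_cofinite_zero).norm
      simp only [norm_zero] at h3
      exact (h3.eventually_lt_const (by norm_num : (0:ℝ) < 1/2)).mono fun n h => h.le
  filter_upwards [h2] with n hn
  have he : 1 - a * Q ^ n = 1 + (-(a * Q ^ n)) := by ring
  rw [he]
  calc ‖Complex.log (1 + -(a * Q ^ n))‖ ≤ 3/2 * ‖-(a * Q ^ n)‖ :=
        norm_log_one_add_half_le_self (by simpa using hn)
    _ = 3/2 * ‖a * Q ^ n‖ := by rw [norm_neg]

lemma qpoch_eq_exp (ha : ‖a‖ < 1) (hQ : ‖Q‖ < 1) :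
    qpoch a Q = Complex.exp (∑' n : ℕ, Complex.log (1 - a * Q ^ n)) := by
  have := Complex.cexp_tsum_eq_tprod (f := fun n : ℕ => 1 - a * Q ^ n)
    (fun n => term_ne_zero ha hQ n) (summable_log_qpoch ha hQ)
  exact this.symm

lemma qpoch_ne_zero (ha : ‖a‖ < 1) (hQ : ‖Q‖ < 1) : qpoch a Q ≠ 0 := by
  rw [qpoch_eq_exp ha hQ]; exact Complex.exp_ne_zero _

lemma multipliable_qpoch (ha : ‖a‖ < 1) (hQ : ‖Q‖ < 1) :
    Multipliable (fun n : ℕ => 1 - a * Q ^ n) :=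
  Complex.multipliable_of_summable_log (summable_log_qpoch ha hQ)

set_option maxHeartbeats 1000000 in
/-- splitting a q-Pochhammer product into residue classes mod `k` -/
lemma qpoch_split (k : ℕ) (hk : k ≠ 0) (ha : ‖a‖ < 1) (hQ : ‖Q‖ < 1) :
    qpoch a Q = ∏ r ∈ range k, qpoch (a * Q ^ r) (Q ^ k) := by
  haveI : NeZero k := ⟨hk⟩
  have hQk : ‖Q ^ k‖ < 1 := by
    rw [norm_pow]; exact pow_lt_one₀ (norm_nonneg Q) hQ hk
  have key : ∀ r ∈ range k, qpoch (a * Q ^ r) (Q ^ k)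
      = Complex.exp (∑' m : ℕ, Complex.log (1 - a * Q ^ (m * k + r))) := by
    intro r hr
    rw [qpoch_eq_exp (term_norm_lt ha hQ r) hQk]
    congr 1
    apply tsum_congr
    intro m
    congr 2
    rw [mul_assoc, ← pow_mul, ← pow_add, Nat.add_comm, Nat.mul_comm]
  rw [Finset.prod_congr rfl key, ← Complex.exp_sum, qpoch_eq_exp ha hQ]
  congr 1
  set g : ℕ → ℂ := fun n => Complex.log (1 - a * Q ^ n) with hgdef
  have hg : Summable g := summable_log_qpoch ha hQ
  set e : Fin k × ℕ ≃ ℕ := (Equiv.prodComm _ _).trans (Nat.divModEquiv k).symm with hedef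
  have hge : Summable (fun p : Fin k × ℕ => g (e p)) := e.summable_iff.mpr hg
  have h1 : ∑' n : ℕ, g n = ∑' p : Fin k × ℕ, g (e p) := (e.tsum_eq g).symm
  rw [h1, hge.tsum_prod, tsum_fintype]
  rw [← Fin.sum_univ_eq_sum_range (fun r => ∑' m : ℕ, Complex.log (1 - a * Q ^ (m * k + r))) k]
  apply Finset.sum_congr rfl
  intro r _
  apply tsum_congr
  intro m
  simp [hedef, hgdef, Nat.divModEquiv]

end machinery

section gauss

variable (t : ℂ)

/-- finite product (t;t)_k -/
noncomputable def pk (k : ℕ) : ℂ := ∏ j ∈ range k, (1 - t ^ (j + 1))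

variable {t}

lemma pk_succ (k : ℕ) : pk t (k + 1) = pk t k * (1 - t ^ (k + 1)) := prod_range_succ _ _

lemma pk_zero : pk t 0 = 1 := prod_range_zero _

lemma pk_ne_zero (ht : ‖t‖ < 1) (k : ℕ) : pk t k ≠ 0 := by
  apply Finset.prod_ne_zero_iff.mpr
  intro j _
  intro h
  have h1 : (1 : ℂ) = t ^ (j + 1) := by linear_combination h
  have h2 : ‖t ^ (j+1)‖ < 1 := by
    rw [norm_pow]; exact pow_lt_one₀ (norm_nonneg t) ht (Nat.succ_ne_zero j)
  rw [← h1] at h2; simp at h2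

variable (t) in
/-- Gaussian binomial coefficient as a ratio of finite products. -/
noncomputable def Gb (m k : ℕ) : ℂ := if k ≤ m then pk t m / (pk t k * pk t (m - k)) else 0

lemma Gb_of_le {m k : ℕ} (h : k ≤ m) : Gb t m k = pk t m / (pk t k * pk t (m - k)) := if_pos h

lemma Gb_of_gt {m k : ℕ} (h : m < k) : Gb t m k = 0 := if_neg (by omega)

lemma Gb_self (ht : ‖t‖ < 1) (m : ℕ) : Gb t m m = 1 := by
  rw [Gb_of_le le_rfl, Nat.sub_self, pk_zero, mul_one, div_self (pk_ne_zero ht m)]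

lemma Gb_zero (ht : ‖t‖ < 1) (m : ℕ) : Gb t m 0 = 1 := by
  rw [Gb_of_le (Nat.zero_le m), Nat.sub_zero, pk_zero, one_mul, div_self (pk_ne_zero ht m)]

/-- first Pascal rule -/
lemma Gb_pascal_a (ht : ‖t‖ < 1) (m k : ℕ) :
    Gb t (m + 1) (k + 1) = Gb t m (k + 1) + t ^ (m - k) * Gb t m k := by
  rcases lt_trichotomy k m with h | rfl | h
  · -- main case : k < m, m = k + 1 + d
    obtain ⟨d, rfl⟩ : ∃ d, m = k + 1 + d := ⟨m - (k+1), by omega⟩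
    rw [Gb_of_le (by omega), Gb_of_le (by omega), Gb_of_le (by omega)]
    have e1 : k + 1 + d + 1 - (k + 1) = d + 1 := by omega
    have e2 : k + 1 + d - (k + 1) = d := by omega
    have e3 : k + 1 + d - k = d + 1 := by omega
    have e4 : k + 1 + d - k + k = k + 1 + d := by omega
    rw [e1, e2, e3]
    have h1 : pk t (k + 1 + d + 1) = pk t (k + 1 + d) * (1 - t ^ (k + 1 + d + 1)) := pk_succ _
    have h2 : pk t (d + 1) = pk t d * (1 - t ^ (d + 1)) := pk_succ _
    have h3 : pk t (k + 1) = pk t k * (1 - t ^ (k + 1)) := pk_succ _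
    rw [h1, h2, h3]
    have n1 := pk_ne_zero ht (k + 1 + d)
    have n2 := pk_ne_zero ht d
    have n3 := pk_ne_zero ht k
    have n4 : (1 - t ^ (d + 1)) ≠ 0 := by
      have := pk_ne_zero ht (d+1); rw [h2] at this; exact right_ne_zero_of_mul this
    have n5 : (1 - t ^ (k + 1)) ≠ 0 := by
      have := pk_ne_zero ht (k+1); rw [h3] at this; exact right_ne_zero_of_mul this
    field_simp
    ring_nf
  · -- k = m
    rw [Gb_self ht, Gb_of_gt (by omega), Gb_self ht, Nat.sub_self, pow_zero]
    ring
  · -- k > m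
    rw [Gb_of_gt (by omega), Gb_of_gt (by omega), Gb_of_gt (by omega)]
    ring

/-- second Pascal rule -/
lemma Gb_pascal_b (ht : ‖t‖ < 1) (m k : ℕ) :
    Gb t (m + 1) (k + 1) = Gb t m k + t ^ (k + 1) * Gb t m (k + 1) := by
  rcases lt_trichotomy k m with h | rfl | h
  · obtain ⟨d, rfl⟩ : ∃ d, m = k + 1 + d := ⟨m - (k+1), by omega⟩
    rw [Gb_of_le (by omega), Gb_of_le (by omega), Gb_of_le (by omega)]
    have e1 : k + 1 + d + 1 - (k + 1) = d + 1 := by omega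
    have e2 : k + 1 + d - (k + 1) = d := by omega
    have e3 : k + 1 + d - k = d + 1 := by omega
    rw [e1, e2, e3]
    have h1 : pk t (k + 1 + d + 1) = pk t (k + 1 + d) * (1 - t ^ (k + 1 + d + 1)) := pk_succ _
    have h2 : pk t (d + 1) = pk t d * (1 - t ^ (d + 1)) := pk_succ _
    have h3 : pk t (k + 1) = pk t k * (1 - t ^ (k + 1)) := pk_succ _
    rw [h1, h2, h3]
    have n1 := pk_ne_zero ht (k + 1 + d)
    have n2 := pk_ne_zero ht d
    have n3 := pk_ne_zero ht k
    have n4 : (1 - t ^ (d + 1)) ≠ 0 := by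
      have := pk_ne_zero ht (d+1); rw [h2] at this; exact right_ne_zero_of_mul this
    have n5 : (1 - t ^ (k + 1)) ≠ 0 := by
      have := pk_ne_zero ht (k+1); rw [h3] at this; exact right_ne_zero_of_mul this
    field_simp
    ring_nf
  · rw [Gb_self ht, Gb_self ht, Gb_of_gt (by omega)]
    ring
  · rw [Gb_of_gt (by omega), Gb_of_gt (by omega), Gb_of_gt (by omega)]
    ring

end gauss

section gz

variable {t : ℂ}

variable (t) in
/-- Gaussian binomial with integer lower index (junk value 0 for negative). -/
noncomputable def Gz (m : ℕ) (k : ℤ) : ℂ := if 0 ≤ k then Gb t m k.toNat else 0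

lemma Gz_natCast (m j : ℕ) : Gz t m (j : ℤ) = Gb t m j := by
  rw [Gz, if_pos (Int.natCast_nonneg j), Int.toNat_natCast]

lemma Gz_neg {m : ℕ} {k : ℤ} (h : k < 0) : Gz t m k = 0 := if_neg (by omega)

lemma Gz_gt {m : ℕ} {k : ℤ} (h : (m : ℤ) < k) : Gz t m k = 0 := by
  rw [Gz, if_pos (by omega : (0:ℤ) ≤ k), Gb_of_gt (by omega)]

/-- The key three-term recurrence for Gaussian binomials. -/
lemma Gz_rec (ht : ‖t‖ < 1) (ht0 : t ≠ 0) (N : ℕ) (k : ℤ) :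
    Gz t (2*N+2) (k+1) = (1 + t^(2*N+1)) * Gz t (2*N) k
      + t ^ ((2*N+1 : ℤ) - k) * Gz t (2*N) (k-1) + t ^ (k+1) * Gz t (2*N) (k+1) := by
  rcases lt_trichotomy k (-1) with hk | rfl | hk
  · rw [Gz_neg (by omega), Gz_neg (by omega), Gz_neg (by omega), Gz_neg (by omega)]
    ring
  · -- k = -1
    rw [Gz_neg (by omega : (-1 : ℤ) - 1 < 0), Gz_neg (by omega : (-1 : ℤ) < 0)]
    norm_num
    rw [show (0 : ℤ) = ((0 : ℕ) : ℤ) from rfl, Gz_natCast, Gz_natCast, Gb_zero ht, Gb_zero ht]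
  · -- k ≥ 0
    obtain ⟨j, rfl⟩ : ∃ j : ℕ, k = (j : ℤ) := ⟨k.toNat, by omega⟩
    rcases j with _ | i
    · -- j = 0
      rw [Gz_neg (by norm_num : ((0:ℕ) : ℤ) - 1 < 0)]
      rw [show ((0:ℕ) : ℤ) + 1 = ((1:ℕ) : ℤ) by norm_num, Gz_natCast, Gz_natCast, Gz_natCast]
      rw [zpow_natCast]
      have h1 : Gb t (2*N+2) 1 = Gb t (2*N+1) 1 + t^(2*N+1) * Gb t (2*N+1) 0 := by
        have h := Gb_pascal_a ht (2*N+1) 0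
        rw [show 2*N+1+1 = 2*N+2 by omega, show 0+1 = 1 by omega, show 2*N+1-0 = 2*N+1 by omega] at h
        exact h
      have h2 : Gb t (2*N+1) 1 = Gb t (2*N) 0 + t^1 * Gb t (2*N) 1 := by
        have h := Gb_pascal_b ht (2*N) 0
        rw [show 2*N+1 = 2*N+1 by omega, show 0+1 = 1 by omega] at h
        exact h
      rw [h1, h2, Gb_zero ht, Gb_zero ht]
      ring
    · -- j = i + 1
      rcases le_or_gt i (2*N) with hi | hi
      · have e1 : ((i:ℕ)+1 : ℤ) + 1 = ((i+2 : ℕ) : ℤ) := by push_cast; ring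
        have e2 : ((i:ℕ)+1 : ℤ) - 1 = ((i : ℕ) : ℤ) := by push_cast; ring
        rw [show (((i+1:ℕ)) : ℤ) + 1 = ((i+2 : ℕ) : ℤ) by push_cast; ring,
          show (((i+1:ℕ)) : ℤ) - 1 = ((i : ℕ) : ℤ) by push_cast; ring,
          Gz_natCast, Gz_natCast, Gz_natCast, Gz_natCast]
        rw [show ((2*N+1 : ℤ)) - ((i+1 : ℕ) : ℤ) = ((2*N - i : ℕ) : ℤ) by push_cast [Nat.cast_sub hi]; ring,
          zpow_natCast, zpow_natCast]
        have h1 : Gb t (2*N+2) (i+2) = Gb t (2*N+1) (i+2) + t^(2*N-i) * Gb t (2*N+1) (i+1) := by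
          have h := Gb_pascal_a ht (2*N+1) (i+1)
          rw [show 2*N+1+1 = 2*N+2 by omega, show i+1+1 = i+2 by omega,
            show 2*N+1-(i+1) = 2*N-i by omega] at h
          exact h
        have h2 : Gb t (2*N+1) (i+2) = Gb t (2*N) (i+1) + t^(i+2) * Gb t (2*N) (i+2) := by
          have h := Gb_pascal_b ht (2*N) (i+1)
          rw [show i+1+1 = i+2 by omega] at h
          exact h
        have h3 : Gb t (2*N+1) (i+1) = Gb t (2*N) i + t^(i+1) * Gb t (2*N) (i+1) := by
          exact Gb_pascal_b ht (2*N) i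
        rw [h1, h2, h3]
        have hp : t^(2*N-i) * t^(i+1) = t^(2*N+1) := by
          rw [← pow_add]
          congr 1
          omega
        linear_combination Gb t (2*N) (i+1) * hp
      · -- i > 2N : everything vanishes
        rw [Gz_gt (by push_cast; omega), Gz_gt (by push_cast; omega),
          Gz_gt (by push_cast; omega), Gz_gt (by push_cast; omega)]
        ring

end gz

section fjtp

variable {q z : ℂ}

/-- Finite Jacobi triple product identity. -/
lemma FJTP (hq : ‖q‖ < 1) (hq0 : q ≠ 0) (hz0 : z ≠ 0) (N : ℕ) :
    ∏ j ∈ range N, ((1 + z * q ^ (2*j+1)) * (1 + z⁻¹ * q ^ (2*j+1))) =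
      ∑ n ∈ Icc (-(N:ℤ)) (N:ℤ), q ^ (n^2) * z ^ n * Gz (q^2) (2*N) ((N:ℤ)+n) := by
  have ht : ‖q^2‖ < 1 := by
    rw [norm_pow]; exact pow_lt_one₀ (norm_nonneg q) hq two_ne_zero
  have ht0 : (q^2 : ℂ) ≠ 0 := pow_ne_zero 2 hq0
  have hsq : ∀ e : ℤ, ((q^2 : ℂ))^e = q^(2*e) := by
    intro e
    rw [← zpow_natCast q 2, ← zpow_mul]
    norm_num
  have hcanon : ∀ E F E' F' : ℤ, E = E' → F = F' → q^E*z^F = q^E'*z^F' := by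
    rintro _ _ _ _ rfl rfl; rfl
  induction N with
  | zero =>
      simp only [range_zero, prod_empty, Nat.cast_zero, neg_zero, Finset.Icc_self,
        Finset.sum_singleton]
      rw [show (0:ℤ) + 0 = ((0:ℕ):ℤ) by norm_num, Gz_natCast, Gb_zero ht]
      norm_num
  | succ N ih =>
      rw [prod_range_succ, ih]
      -- the per-term expansion on the bigger sum
      have term_eq : ∀ n : ℤ,
          q ^ (n^2) * z ^ n * Gz (q^2) (2*(N+1)) (((N:ℤ)+1)+n)
          = (1 + q^(4*N+2)) * (q ^ (n^2) * z ^ n * Gz (q^2) (2*N) ((N:ℤ)+n))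
            + (q^(2*N+1)*z) * (q ^ ((n-1)^2) * z ^ (n-1) * Gz (q^2) (2*N) ((N:ℤ)+(n-1)))
            + (q^(2*N+1)*z⁻¹) * (q ^ ((n+1)^2) * z ^ (n+1) * Gz (q^2) (2*N) ((N:ℤ)+(n+1))) := by
        intro n
        have h := Gz_rec ht ht0 N ((N:ℤ)+n)
        rw [show ((N:ℤ)+1)+n = ((N:ℤ)+n)+1 by ring, show 2*(N+1) = 2*N+2 by omega, h]
        have c1 : ((q^2 : ℂ))^(2*N+1) = q^(4*N+2) := by
          rw [← pow_mul]; congr 1; omega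
        have c2 : q ^ (n^2) * z ^ n * ((q^2 : ℂ))^((2*N+1:ℤ) - ((N:ℤ)+n))
            = (q^(2*N+1)*z) * (q ^ ((n-1)^2) * z ^ (n-1)) := by
          rw [hsq, ← zpow_natCast q (2*N+1)]
          calc q ^ (n^2) * z ^ n * q^(2*((2*N+1:ℤ) - ((N:ℤ)+n)))
              = q ^ (n^2 + 2*((2*N+1:ℤ) - ((N:ℤ)+n))) * z ^ n := by
                rw [zpow_add₀ hq0]; ring
            _ = q ^ (((2*N+1:ℕ):ℤ) + (n-1)^2) * z ^ (1 + (n-1)) := by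
                apply hcanon <;> push_cast <;> ring
            _ = q^((2*N+1:ℕ):ℤ)*z * (q ^ ((n-1)^2) * z ^ (n-1)) := by
                rw [zpow_add₀ hq0, zpow_add₀ hz0, zpow_one]; ring
        have c3 : q ^ (n^2) * z ^ n * ((q^2 : ℂ))^(((N:ℤ)+n) + 1)
            = (q^(2*N+1)*z⁻¹) * (q ^ ((n+1)^2) * z ^ (n+1)) := by
          rw [hsq, ← zpow_natCast q (2*N+1), ← zpow_neg_one z]
          calc q ^ (n^2) * z ^ n * q^(2*(((N:ℤ)+n) + 1))
              = q ^ (n^2 + 2*(((N:ℤ)+n) + 1)) * z ^ n := by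
                rw [zpow_add₀ hq0]; ring
            _ = q ^ (((2*N+1:ℕ):ℤ) + (n+1)^2) * z ^ ((-1) + (n+1)) := by
                apply hcanon <;> push_cast <;> ring
            _ = q^((2*N+1:ℕ):ℤ)*z^(-1:ℤ) * (q ^ ((n+1)^2) * z ^ (n+1)) := by
                rw [zpow_add₀ hq0, zpow_add₀ hz0]; ring
        rw [show (N:ℤ)+(n-1) = ((N:ℤ)+n)-1 by ring, show (N:ℤ)+(n+1) = ((N:ℤ)+n)+1 by ring]
        rw [mul_add, mul_add]
        rw [show q ^ (n^2) * z ^ n * ((1 + (q^2:ℂ)^(2*N+1)) * Gz (q^2) (2*N) ((N:ℤ)+n))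
            = (1 + (q^2:ℂ)^(2*N+1)) * (q ^ (n^2) * z ^ n * Gz (q^2) (2*N) ((N:ℤ)+n)) by ring,
          c1]
        rw [show q ^ (n^2) * z ^ n * ((q^2:ℂ)^((2*N+1:ℤ) - ((N:ℤ)+n)) * Gz (q^2) (2*N) (((N:ℤ)+n)-1))
            = (q ^ (n^2) * z ^ n * (q^2:ℂ)^((2*N+1:ℤ) - ((N:ℤ)+n))) * Gz (q^2) (2*N) (((N:ℤ)+n)-1) by ring,
          c2]
        rw [show q ^ (n^2) * z ^ n * ((q^2:ℂ)^(((N:ℤ)+n)+1) * Gz (q^2) (2*N) (((N:ℤ)+n)+1))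
            = (q ^ (n^2) * z ^ n * (q^2:ℂ)^(((N:ℤ)+n)+1)) * Gz (q^2) (2*N) (((N:ℤ)+n)+1) by ring,
          c3]
        ring
      have hcast : ((N+1:ℕ):ℤ) = (N:ℤ)+1 := by push_cast; ring
      rw [hcast, Finset.sum_congr rfl fun n _ => term_eq n]
      rw [Finset.sum_add_distrib, Finset.sum_add_distrib, ← Finset.mul_sum, ← Finset.mul_sum,
        ← Finset.mul_sum]
      set S := ∑ n ∈ Icc (-(N:ℤ)) (N:ℤ), q ^ (n^2) * z ^ n * Gz (q^2) (2*N) ((N:ℤ)+n) with hS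
      have e1 : ∑ n ∈ Icc (-((N:ℤ)+1)) ((N:ℤ)+1), q ^ (n^2) * z ^ n * Gz (q^2) (2*N) ((N:ℤ)+n)
          = S := by
        refine (Finset.sum_subset (Finset.Icc_subset_Icc (by omega) (by omega)) ?_).symm
        intro n h1 h2
        rw [Finset.mem_Icc] at h1 h2
        have : (N:ℤ) + n < 0 ∨ ((2*N : ℕ):ℤ) < (N:ℤ)+n := by push_cast; omega
        rcases this with h | h
        · rw [Gz_neg h, mul_zero]
        · rw [Gz_gt h, mul_zero]
      have e2 : ∑ n ∈ Icc (-((N:ℤ)+1)) ((N:ℤ)+1),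
            q ^ ((n-1)^2) * z ^ (n-1) * Gz (q^2) (2*N) ((N:ℤ)+(n-1)) = S := by
        have step1 : ∑ n ∈ Icc (-((N:ℤ)+1)) ((N:ℤ)+1),
              q ^ ((n-1)^2) * z ^ (n-1) * Gz (q^2) (2*N) ((N:ℤ)+(n-1))
            = ∑ n ∈ Icc (-(N:ℤ)+1) ((N:ℤ)+1),
              q ^ ((n-1)^2) * z ^ (n-1) * Gz (q^2) (2*N) ((N:ℤ)+(n-1)) := by
          refine (Finset.sum_subset (Finset.Icc_subset_Icc (by omega) (by omega)) ?_).symm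
          intro n h1 h2
          rw [Finset.mem_Icc] at h1 h2
          rw [Gz_neg (by omega), mul_zero]
        rw [step1]
        refine Finset.sum_bij' (fun n _ => n - 1) (fun m _ => m + 1) ?_ ?_ ?_ ?_ ?_
        · intro a ha; simp only [Finset.mem_Icc] at ha ⊢; omega
        · intro a ha; simp only [Finset.mem_Icc] at ha ⊢; omega
        · intro a ha; ring
        · intro a ha; ring
        · intro a ha; rfl
      have e3 : ∑ n ∈ Icc (-((N:ℤ)+1)) ((N:ℤ)+1),
            q ^ ((n+1)^2) * z ^ (n+1) * Gz (q^2) (2*N) ((N:ℤ)+(n+1)) = S := by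
        have step1 : ∑ n ∈ Icc (-((N:ℤ)+1)) ((N:ℤ)+1),
              q ^ ((n+1)^2) * z ^ (n+1) * Gz (q^2) (2*N) ((N:ℤ)+(n+1))
            = ∑ n ∈ Icc (-((N:ℤ)+1)) ((N:ℤ)-1),
              q ^ ((n+1)^2) * z ^ (n+1) * Gz (q^2) (2*N) ((N:ℤ)+(n+1)) := by
          refine (Finset.sum_subset (Finset.Icc_subset_Icc (by omega) (by omega)) ?_).symm
          intro n h1 h2
          rw [Finset.mem_Icc] at h1 h2
          rw [Gz_gt (by push_cast; omega), mul_zero]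
        rw [step1]
        refine Finset.sum_bij' (fun n _ => n + 1) (fun m _ => m - 1) ?_ ?_ ?_ ?_ ?_
        · intro a ha; simp only [Finset.mem_Icc] at ha ⊢; omega
        · intro a ha; simp only [Finset.mem_Icc] at ha ⊢; omega
        · intro a ha; ring
        · intro a ha; ring
        · intro a ha; rfl
      rw [e1, e2, e3]
      have hzz : z * z⁻¹ = 1 := mul_inv_cancel₀ hz0
      have hq4 : q^(4*N+2) = q^(2*N+1)*q^(2*N+1) := by rw [← pow_add]; congr 1; omega
      rw [hq4]
      linear_combination (S * (q^(2*N+1)) * (q^(2*N+1))) * hzz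

end fjtp

section bounds

variable {t : ℂ}

/-- uniform upper bound for `pk` -/
lemma pk_norm_upper (ht : ‖t‖ < 1) (k : ℕ) :
    ‖pk t k‖ ≤ Real.exp (‖t‖ / (1 - ‖t‖)) := by
  have h0 : (0:ℝ) ≤ ‖t‖ := norm_nonneg t
  have h1 : (0:ℝ) < 1 - ‖t‖ := by linarith
  have hsum : ∑ j ∈ range k, ‖t‖^(j+1) ≤ ‖t‖ / (1 - ‖t‖) := by
    have hsummable : Summable (fun j : ℕ => ‖t‖^(j+1)) := by
      simpa [pow_succ'] using (summable_geometric_of_lt_one h0 ht).mul_left ‖t‖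
    calc ∑ j ∈ range k, ‖t‖^(j+1) ≤ ∑' j : ℕ, ‖t‖^(j+1) :=
          Summable.sum_le_tsum _ (fun b _ => by positivity) hsummable
      _ = ‖t‖ * ∑' j : ℕ, ‖t‖^j := by
          rw [← tsum_mul_left]
          exact tsum_congr fun j => by rw [pow_succ']
      _ = ‖t‖ * (1 - ‖t‖)⁻¹ := by rw [tsum_geometric_of_lt_one h0 ht]
      _ = ‖t‖ / (1 - ‖t‖) := by rw [div_eq_mul_inv]
  calc ‖pk t k‖ = ∏ j ∈ range k, ‖1 - t^(j+1)‖ := norm_prod _ _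
    _ ≤ ∏ j ∈ range k, Real.exp (‖t‖^(j+1)) := by
        refine Finset.prod_le_prod (fun j _ => norm_nonneg _) (fun j _ => ?_)
        calc ‖1 - t^(j+1)‖ ≤ ‖(1:ℂ)‖ + ‖t^(j+1)‖ := norm_sub_le _ _
          _ = ‖t‖^(j+1) + 1 := by rw [norm_one, norm_pow]; ring
          _ ≤ Real.exp (‖t‖^(j+1)) := Real.add_one_le_exp _
    _ = Real.exp (∑ j ∈ range k, ‖t‖^(j+1)) := (Real.exp_sum _ _).symm
    _ ≤ Real.exp (‖t‖ / (1 - ‖t‖)) := Real.exp_le_exp.mpr hsum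

/-- uniform positive lower bound for `pk` -/
lemma pk_norm_lower (ht : ‖t‖ < 1) (k : ℕ) :
    Real.exp (-(‖t‖ / (1 - ‖t‖)^2)) ≤ ‖pk t k‖ := by
  have h0 : (0:ℝ) ≤ ‖t‖ := norm_nonneg t
  have h1 : (0:ℝ) < 1 - ‖t‖ := by linarith
  have key : ∀ x : ℝ, 0 ≤ x → x ≤ ‖t‖ → Real.exp (-(x/(1-‖t‖))) ≤ 1 - x := by
    intro x hx0 hxr
    have hx1 : (0:ℝ) < 1 - x := by linarith
    have e1 : Real.exp (x/(1-x)) ≥ 1/(1-x) := by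
      have := Real.add_one_le_exp (x/(1-x))
      have e2 : x/(1-x) + 1 = 1/(1-x) := by field_simp; ring
      linarith
    have e3 : Real.exp (-(x/(1-x))) ≤ 1 - x := by
      rw [Real.exp_neg]
      rw [inv_le_comm₀ (Real.exp_pos _) hx1]
      calc (1-x)⁻¹ = 1/(1-x) := by rw [one_div]
        _ ≤ Real.exp (x/(1-x)) := e1
    refine le_trans (Real.exp_le_exp.mpr ?_) e3
    rw [neg_le_neg_iff]
    exact div_le_div_of_nonneg_left hx0 h1 (by linarith)
  have hsum : ∑ j ∈ range k, ‖t‖^(j+1)/(1-‖t‖) ≤ ‖t‖ / (1 - ‖t‖)^2 := by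
    rw [← Finset.sum_div]
    rw [div_le_div_iff₀ h1 (by positivity)]
    have hs2 : ∑ j ∈ range k, ‖t‖^(j+1) ≤ ‖t‖ / (1 - ‖t‖) := by
      have hsummable : Summable (fun j : ℕ => ‖t‖^(j+1)) := by
        simpa [pow_succ'] using (summable_geometric_of_lt_one h0 ht).mul_left ‖t‖
      calc ∑ j ∈ range k, ‖t‖^(j+1) ≤ ∑' j : ℕ, ‖t‖^(j+1) :=
            Summable.sum_le_tsum _ (fun b _ => by positivity) hsummable
        _ = ‖t‖ * ∑' j : ℕ, ‖t‖^j := by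
            rw [← tsum_mul_left]
            exact tsum_congr fun j => by rw [pow_succ']
        _ = ‖t‖ * (1 - ‖t‖)⁻¹ := by rw [tsum_geometric_of_lt_one h0 ht]
        _ = ‖t‖ / (1 - ‖t‖) := by rw [div_eq_mul_inv]
    calc (∑ j ∈ range k, ‖t‖^(j+1)) * (1-‖t‖)^2
        ≤ (‖t‖/(1-‖t‖)) * (1-‖t‖)^2 := by
          apply mul_le_mul_of_nonneg_right hs2 (by positivity)
      _ = ‖t‖ * (1 - ‖t‖) := by rw [sq, ← mul_assoc, div_mul_cancel₀ _ h1.ne']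
  calc Real.exp (-(‖t‖ / (1 - ‖t‖)^2))
      ≤ Real.exp (-(∑ j ∈ range k, ‖t‖^(j+1)/(1-‖t‖))) := by
        rw [Real.exp_le_exp, neg_le_neg_iff]; exact hsum
    _ = ∏ j ∈ range k, Real.exp (-(‖t‖^(j+1)/(1-‖t‖))) := by
        rw [← Real.exp_sum, ← Finset.sum_neg_distrib]
    _ ≤ ∏ j ∈ range k, ‖1 - t^(j+1)‖ := by
        refine Finset.prod_le_prod (fun j _ => (Real.exp_pos _).le) (fun j _ => ?_)
        have hx0 : (0:ℝ) ≤ ‖t‖^(j+1) := by positivity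
        have hxr : ‖t‖^(j+1) ≤ ‖t‖ := by
          calc ‖t‖^(j+1) ≤ ‖t‖^1 := pow_le_pow_of_le_one h0 ht.le (by omega)
            _ = ‖t‖ := pow_one _
        calc Real.exp (-(‖t‖^(j+1)/(1-‖t‖))) ≤ 1 - ‖t‖^(j+1) := key _ hx0 hxr
          _ = ‖(1:ℂ)‖ - ‖t^(j+1)‖ := by rw [norm_one, norm_pow]
          _ ≤ ‖1 - t^(j+1)‖ := norm_sub_norm_le _ _
    _ = ‖pk t k‖ := (norm_prod _ _).symm

/-- uniform bound constant for Gaussian binomials -/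
noncomputable def GbBound (t : ℂ) : ℝ :=
  Real.exp (‖t‖ / (1 - ‖t‖)) / Real.exp (-(‖t‖ / (1 - ‖t‖)^2))^2

lemma GbBound_nonneg (t : ℂ) : 0 ≤ GbBound t := by
  unfold GbBound; positivity

lemma Gb_norm_le (ht : ‖t‖ < 1) (m k : ℕ) : ‖Gb t m k‖ ≤ GbBound t := by
  rcases le_or_gt k m with h | h
  · rw [Gb_of_le h, GbBound]
    rw [norm_div, norm_mul]
    apply div_le_div₀ (by positivity) (pk_norm_upper ht m) (by positivity)
    calc Real.exp (-(‖t‖ / (1 - ‖t‖)^2))^2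
        = Real.exp (-(‖t‖ / (1 - ‖t‖)^2)) * Real.exp (-(‖t‖ / (1 - ‖t‖)^2)) := sq _
      _ ≤ ‖pk t k‖ * ‖pk t (m-k)‖ := by
          apply mul_le_mul (pk_norm_lower ht k) (pk_norm_lower ht (m-k))
            (Real.exp_pos _).le (norm_nonneg _)
  · rw [Gb_of_gt h, norm_zero]
    exact GbBound_nonneg t

lemma Gz_norm_le (ht : ‖t‖ < 1) (m : ℕ) (k : ℤ) : ‖Gz t m k‖ ≤ GbBound t := by
  rw [Gz]
  split
  · exact Gb_norm_le ht m _
  · rw [norm_zero]; exact GbBound_nonneg t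

end bounds

section jtp

open Filter

variable {q z : ℂ}

lemma sq_pow_bound (hq : ‖q‖ < 1) (w : ℂ) : ∀ k : ℕ, ‖q‖^(k^2) * ‖w‖^k ≤ ‖w*q‖^k := by
  intro k
  induction k with
  | zero => simp
  | succ k ih =>
      have e : (k+1)^2 = k^2 + (2*k+1) := by ring
      rw [e, pow_add, pow_succ, pow_succ]
      have h1 : ‖q‖^(2*k+1) * ‖w‖ ≤ ‖w*q‖ := by
        have : ‖q‖^(2*k+1) * ‖w‖ = ‖q‖^(2*k) * (‖q‖ * ‖w‖) := by rw [pow_succ]; ring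
        rw [this, norm_mul]
        calc ‖q‖^(2*k) * (‖q‖ * ‖w‖) ≤ 1 * (‖q‖ * ‖w‖) := by
              apply mul_le_mul_of_nonneg_right (pow_le_one₀ (norm_nonneg q) hq.le) (by positivity)
          _ = ‖w‖ * ‖q‖ := by ring
      calc ‖q‖^(k^2) * ‖q‖^(2*k+1) * (‖w‖^k * ‖w‖)
          = (‖q‖^(k^2) * ‖w‖^k) * (‖q‖^(2*k+1) * ‖w‖) := by ring
        _ ≤ ‖w*q‖^k * ‖w*q‖ := by
            apply mul_le_mul ih h1 (by positivity) (by positivity)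

theorem JTP (hq : ‖q‖ < 1) (hq0 : q ≠ 0) (hz0 : z ≠ 0) (hz1 : ‖z*q‖ < 1)
    (hz2 : ‖z⁻¹*q‖ < 1) :
    ∑' n : ℤ, q ^ (n^2) * z ^ n
      = qpoch (q^2) (q^2) * qpoch (-(z*q)) (q^2) * qpoch (-(z⁻¹*q)) (q^2) := by
  have ht : ‖q^2‖ < 1 := by
    rw [norm_pow]; exact pow_lt_one₀ (norm_nonneg q) hq two_ne_zero
  set P := qpoch (q^2) (q^2) with hPdef
  have hPne : P ≠ 0 := qpoch_ne_zero ht ht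
  -- partial products of pk tend to P
  have hpk : Tendsto (fun k => pk (q^2) k) atTop (𝓝 P) := by
    have := (multipliable_qpoch (a := q^2) (Q := q^2) ht ht).hasProd.tendsto_prod_nat
    refine this.congr fun k => ?_
    exact prod_congr rfl fun j _ => by rw [pow_succ' (q^2) j]
  -- left side tendsto
  have hterm1 : ∀ j : ℕ, (1 : ℂ) - (-(z*q))*(q^2)^j = 1 + z*q^(2*j+1) := by
    intro j
    rw [show q^(2*j+1) = q * (q^2)^j by rw [pow_succ' q (2*j), pow_mul]]
    ring
  have hterm2 : ∀ j : ℕ, (1 : ℂ) - (-(z⁻¹*q))*(q^2)^j = 1 + z⁻¹*q^(2*j+1) := by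
    intro j
    rw [show q^(2*j+1) = q * (q^2)^j by rw [pow_succ' q (2*j), pow_mul]]
    ring
  have hA : Tendsto (fun N => ∏ j ∈ range N, ((1 + z*q^(2*j+1))*(1 + z⁻¹*q^(2*j+1)))) atTop
      (𝓝 (qpoch (-(z*q)) (q^2) * qpoch (-(z⁻¹*q)) (q^2))) := by
    have h1 := (multipliable_qpoch (a := -(z*q)) (Q := q^2)
      (by rw [norm_neg]; exact hz1) ht).hasProd.tendsto_prod_nat
    have h2 := (multipliable_qpoch (a := -(z⁻¹*q)) (Q := q^2)
      (by rw [norm_neg]; exact hz2) ht).hasProd.tendsto_prod_nat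
    refine (h1.mul h2).congr fun N => ?_
    rw [← prod_mul_distrib]
    exact prod_congr rfl fun j _ => by rw [hterm1 j, hterm2 j]
  -- the summand functions
  set C := GbBound (q^2) with hCdef
  set M := max ‖z*q‖ ‖z⁻¹*q‖ with hMdef
  have hM1 : M < 1 := max_lt hz1 hz2
  have hM0 : (0:ℝ) ≤ M := le_trans (norm_nonneg _) (le_max_left _ _)
  have hnorm : ∀ n : ℤ, ‖q ^ (n^2) * z ^ n‖ ≤ M ^ n.natAbs := by
    intro n
    obtain ⟨k, rfl | rfl⟩ := Int.eq_nat_or_neg n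
    · rw [show ((k:ℤ)^2) = ((k^2 : ℕ) : ℤ) by push_cast; ring, zpow_natCast, zpow_natCast,
        norm_mul, norm_pow, norm_pow]
      calc ‖q‖^(k^2) * ‖z‖^k ≤ ‖z*q‖^k := sq_pow_bound hq z k
        _ ≤ M^k := pow_le_pow_left₀ (norm_nonneg _) (le_max_left _ _) k
        _ = M ^ (k:ℤ).natAbs := by simp
    · rw [show ((-(k:ℤ))^2) = ((k^2 : ℕ) : ℤ) by push_cast; ring, zpow_natCast,
        show z^(-(k:ℤ)) = (z⁻¹)^k by rw [zpow_neg, zpow_natCast, inv_pow],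
        norm_mul, norm_pow, norm_pow]
      calc ‖q‖^(k^2) * ‖z⁻¹‖^k ≤ ‖z⁻¹*q‖^k := sq_pow_bound hq z⁻¹ k
        _ ≤ M^k := pow_le_pow_left₀ (norm_nonneg _) (le_max_right _ _) k
        _ = M ^ (-(k:ℤ)).natAbs := by simp
  set F : ℕ → ℤ → ℂ := fun N n =>
    if n ∈ Icc (-(N:ℤ)) (N:ℤ) then q ^ (n^2) * z ^ n * Gz (q^2) (2*N) ((N:ℤ)+n) else 0
    with hFdef
  have hFA : ∀ N, (∏ j ∈ range N, ((1 + z*q^(2*j+1))*(1 + z⁻¹*q^(2*j+1)))) = ∑' n : ℤ, F N n := by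
    intro N
    rw [FJTP hq hq0 hz0 N, tsum_eq_sum (s := Icc (-(N:ℤ)) (N:ℤ)) (fun b hb => if_neg hb)]
    exact Finset.sum_congr rfl fun n hn => (if_pos hn).symm
  have hbound : ∀ N, ∀ n : ℤ, ‖F N n‖ ≤ M ^ n.natAbs * C := by
    intro N n
    simp only [hFdef]
    split
    · rw [norm_mul]
      apply mul_le_mul (hnorm n) (Gz_norm_le ht _ _) (norm_nonneg _) (by positivity)
    · rw [norm_zero]
      have := GbBound_nonneg (q^2)
      positivity
  have hsummable_bound : Summable (fun n : ℤ => M ^ n.natAbs * C) := by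
    apply Summable.mul_right
    apply Summable.of_nat_of_neg <;>
      simpa using summable_geometric_of_lt_one hM0 hM1
  have hptw : ∀ n : ℤ, Tendsto (fun N => F N n) atTop (𝓝 (q ^ (n^2) * z ^ n * P⁻¹)) := by
    intro n
    have t1 : Tendsto (fun N : ℕ => 2*N) atTop atTop :=
      tendsto_atTop_mono (fun N => by simp only [id]; omega) tendsto_id
    have t2 : Tendsto (fun N : ℕ => ((N:ℤ)+n).toNat) atTop atTop :=
      tendsto_atTop_mono (fun N => by omega : ∀ N : ℕ, N - n.natAbs ≤ ((N:ℤ)+n).toNat)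
        (tendsto_sub_atTop_nat _)
    have t3 : Tendsto (fun N : ℕ => ((N:ℤ)-n).toNat) atTop atTop :=
      tendsto_atTop_mono (fun N => by omega : ∀ N : ℕ, N - n.natAbs ≤ ((N:ℤ)-n).toNat)
        (tendsto_sub_atTop_nat _)
    have l1 := hpk.comp t1
    have l2 := hpk.comp t2
    have l3 := hpk.comp t3
    have hPP : P * P ≠ 0 := mul_ne_zero hPne hPne
    have hdiv : Tendsto (fun N : ℕ =>
        q ^ (n^2) * z ^ n * (pk (q^2) (2*N) / (pk (q^2) (((N:ℤ)+n).toNat) * pk (q^2) (((N:ℤ)-n).toNat))))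
        atTop (𝓝 (q ^ (n^2) * z ^ n * (P / (P * P)))) := by
      exact Tendsto.const_mul _ (l1.div (l2.mul l3) hPP)
    have hval : q ^ (n^2) * z ^ n * (P / (P * P)) = q ^ (n^2) * z ^ n * P⁻¹ := by
      congr 1
      field_simp
    rw [hval] at hdiv
    refine Tendsto.congr' ?_ hdiv
    filter_upwards [Filter.eventually_ge_atTop n.natAbs] with N hN
    have hmem : n ∈ Icc (-(N:ℤ)) (N:ℤ) := by
      simp only [mem_Icc]; omega
    simp only [hFdef]
    rw [if_pos hmem, Gz, if_pos (by omega : (0:ℤ) ≤ (N:ℤ)+n),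
      Gb_of_le (by omega : ((N:ℤ)+n).toNat ≤ 2*N)]
    congr 4
    omega
  have hTan := tendsto_tsum_of_dominated_convergence hsummable_bound hptw
    (Filter.Eventually.of_forall hbound)
  have hA' : Tendsto (fun N => ∑' n : ℤ, F N n) atTop
      (𝓝 (qpoch (-(z*q)) (q^2) * qpoch (-(z⁻¹*q)) (q^2))) := hA.congr hFA
  have huniq : qpoch (-(z*q)) (q^2) * qpoch (-(z⁻¹*q)) (q^2)
      = ∑' n : ℤ, q ^ (n^2) * z ^ n * P⁻¹ := tendsto_nhds_unique hA' hTan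
  rw [tsum_mul_right] at huniq
  calc ∑' n : ℤ, q ^ (n^2) * z ^ n
      = (∑' n : ℤ, q ^ (n^2) * z ^ n) * P⁻¹ * P := by field_simp
    _ = (qpoch (-(z*q)) (q^2) * qpoch (-(z⁻¹*q)) (q^2)) * P := by rw [← huniq]
    _ = P * qpoch (-(z*q)) (q^2) * qpoch (-(z⁻¹*q)) (q^2) := by ring

end jtp

section assembly

variable {q z : ℂ}

lemma theta_term_bound (hq : ‖q‖ < 1) :
    ∀ n : ℤ, ‖q ^ (n^2) * z ^ n‖ ≤ (max ‖z*q‖ ‖z⁻¹*q‖) ^ n.natAbs := by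
  intro n
  obtain ⟨k, rfl | rfl⟩ := Int.eq_nat_or_neg n
  · rw [show ((k:ℤ)^2) = ((k^2 : ℕ) : ℤ) by push_cast; ring, zpow_natCast, zpow_natCast,
      norm_mul, norm_pow, norm_pow]
    calc ‖q‖^(k^2) * ‖z‖^k ≤ ‖z*q‖^k := sq_pow_bound hq z k
      _ ≤ (max ‖z*q‖ ‖z⁻¹*q‖)^k := pow_le_pow_left₀ (norm_nonneg _) (le_max_left _ _) k
      _ = (max ‖z*q‖ ‖z⁻¹*q‖) ^ (k:ℤ).natAbs := by simp
  · rw [show ((-(k:ℤ))^2) = ((k^2 : ℕ) : ℤ) by push_cast; ring, zpow_natCast,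
      show z^(-(k:ℤ)) = (z⁻¹)^k by rw [zpow_neg, zpow_natCast, inv_pow],
      norm_mul, norm_pow, norm_pow]
    calc ‖q‖^(k^2) * ‖z⁻¹‖^k ≤ ‖z⁻¹*q‖^k := sq_pow_bound hq z⁻¹ k
      _ ≤ (max ‖z*q‖ ‖z⁻¹*q‖)^k := pow_le_pow_left₀ (norm_nonneg _) (le_max_right _ _) k
      _ = (max ‖z*q‖ ‖z⁻¹*q‖) ^ (-(k:ℤ)).natAbs := by simp

lemma theta_summable (hq : ‖q‖ < 1) (hz1 : ‖z*q‖ < 1) (hz2 : ‖z⁻¹*q‖ < 1) :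
    Summable (fun n : ℤ => q ^ (n^2) * z ^ n) := by
  have hM1 : max ‖z*q‖ ‖z⁻¹*q‖ < 1 := max_lt hz1 hz2
  have hM0 : (0:ℝ) ≤ max ‖z*q‖ ‖z⁻¹*q‖ := le_trans (norm_nonneg _) (le_max_left _ _)
  have hgeo : Summable (fun n : ℤ => (max ‖z*q‖ ‖z⁻¹*q‖) ^ n.natAbs) := by
    apply Summable.of_nat_of_neg <;> simpa using summable_geometric_of_lt_one hM0 hM1
  exact hgeo.of_norm_bounded (theta_term_bound hq)

set_option maxHeartbeats 1600000 in
lemma parity_split (hq : ‖q‖ < 1) (hq0 : q ≠ 0) :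
    ∑' m : ℤ, (q^2 : ℂ)^(m^2) * (-q⁻¹)^m
      = ∑' a : ℤ, (q^8 : ℂ)^(a^2) * ((q^2)⁻¹)^a
        - q * ∑' a : ℤ, (q^8 : ℂ)^(a^2) * ((q^6)⁻¹)^a := by
  have hq2 : (q^2 : ℂ) ≠ 0 := pow_ne_zero _ hq0
  have hqn : ∀ k : ℕ, k ≠ 0 → ‖q^k‖ < 1 := fun k hk => by
    rw [norm_pow]; exact pow_lt_one₀ (norm_nonneg q) hq hk
  have hpow : ∀ (k : ℕ) (e : ℤ), ((q^k : ℂ))^e = q^((k:ℤ)*e) := fun k e => by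
    rw [← zpow_natCast q k, ← zpow_mul]
  have hneg : ∀ e : ℤ, ((-q⁻¹ : ℂ))^e = (-1)^e * q^(-e) := fun e => by
    rw [show (-q⁻¹ : ℂ) = (-1) * q⁻¹ by ring, mul_zpow, inv_zpow, ← zpow_neg]
  set f : ℤ → ℂ := fun m => (q^2 : ℂ)^(m^2) * (-q⁻¹)^m with hf
  set g : ℤ → ℂ := fun n => (q^8 : ℂ)^(n^2) * ((q^6)⁻¹)^n with hg
  have hfs : Summable f := by
    apply theta_summable (hqn 2 (by norm_num))
    · rw [show (-q⁻¹ : ℂ) * q^2 = -q by field_simp, norm_neg]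
      exact hq
    · rw [show ((-q⁻¹ : ℂ))⁻¹ * q^2 = -q^3 by rw [inv_neg, inv_inv]; ring, norm_neg]
      exact hqn 3 (by norm_num)
  set e : ℤ × Fin 2 ≃ ℤ := (Int.divModEquiv 2).symm with he
  have h1 : ∑' m : ℤ, f m = ∑' p : ℤ × Fin 2, f (e p) := (e.tsum_eq f).symm
  have hfe : Summable fun p : ℤ × Fin 2 => f (e p) := e.summable_iff.mpr hfs
  have h2 : ∑' p : ℤ × Fin 2, f (e p) = ∑' a : ℤ, ∑' b : Fin 2, f (e (a, b)) := hfe.tsum_prod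
  have h3 : ∀ a : ℤ, (∑' b : Fin 2, f (e (a, b))) = f (a*2) + f (a*2+1) := by
    intro a
    have e0 : e (a, 0) = a*2 := by simp [he, Int.divModEquiv]
    have e1 : e (a, 1) = a*2+1 := by simp [he, Int.divModEquiv]
    rw [tsum_fintype, Fin.sum_univ_two, e0, e1]
  have hinj1 : Function.Injective (fun a : ℤ => a*2) := fun x y h => by
    change x*2 = y*2 at h; omega
  have hinj2 : Function.Injective (fun a : ℤ => a*2+1) := fun x y h => by
    change x*2+1 = y*2+1 at h; omega
  have h4 : ∑' a : ℤ, (f (a*2) + f (a*2+1)) = (∑' a : ℤ, f (a*2)) + ∑' a : ℤ, f (a*2+1) :=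
    Summable.tsum_add (hfs.comp_injective hinj1) (hfs.comp_injective hinj2)
  have hterm1 : ∀ a : ℤ, f (a*2) = (q^8 : ℂ)^(a^2) * ((q^2)⁻¹)^a := by
    intro a
    rw [hf]
    simp only []
    rw [hpow 2, hneg, show ((-1:ℂ))^(a*2) = 1 by rw [mul_comm, zpow_mul]; norm_num,
      one_mul, ← zpow_add₀ hq0, hpow 8, inv_zpow, ← zpow_neg, hpow 2, ← zpow_add₀ hq0]
    congr 1
    ring
  have hterm2 : ∀ a : ℤ, f (a*2+1) = (-q) * g (-a) := by
    intro a
    have hinvp : ∀ (k : ℕ) (e : ℤ), ((q^k)⁻¹ : ℂ)^e = q^(-((k:ℤ)*e)) := fun k e => by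
      rw [inv_zpow, ← zpow_neg, hpow, mul_neg]
    rw [hf, hg]
    simp only []
    rw [hpow 2, hneg, hpow 8, hinvp 6, show ((-1:ℂ))^(a*2+1) = -1 by
      rw [zpow_add₀ (by norm_num : (-1:ℂ) ≠ 0), mul_comm a 2, zpow_mul]; norm_num]
    push_cast
    rw [show q^((2:ℤ)*(a*2+1)^2) * (-1 * q^(-(a*2+1)))
        = -(q^((2:ℤ)*(a*2+1)^2) * q^(-(a*2+1))) from by ring, ← zpow_add₀ hq0]
    rw [show (-q : ℂ) * (q^((8:ℤ)*(-a)^2) * q^(-((6:ℤ)*(-a))))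
        = -(q^(1:ℤ) * (q^((8:ℤ)*(-a)^2) * q^(-((6:ℤ)*(-a))))) from by rw [zpow_one]; ring,
      ← zpow_add₀ hq0, ← zpow_add₀ hq0]
    congr 1
    congr 1
    ring
  calc ∑' m : ℤ, f m = ∑' a : ℤ, (f (a*2) + f (a*2+1)) := by
        rw [h1, h2]; exact tsum_congr h3
    _ = (∑' a : ℤ, f (a*2)) + ∑' a : ℤ, f (a*2+1) := h4
    _ = (∑' a : ℤ, (q^8 : ℂ)^(a^2) * ((q^2)⁻¹)^a) + ∑' a : ℤ, (-q) * g (-a) := by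
        rw [tsum_congr hterm1, tsum_congr hterm2]
    _ = (∑' a : ℤ, (q^8 : ℂ)^(a^2) * ((q^2)⁻¹)^a) + (-q) * ∑' a : ℤ, g (-a) := by
        rw [tsum_mul_left]
    _ = (∑' a : ℤ, (q^8 : ℂ)^(a^2) * ((q^2)⁻¹)^a) + (-q) * ∑' n : ℤ, g n := by
        have hneg_sum : ∑' a : ℤ, g (-a) = ∑' n : ℤ, g n := by
          rw [← (Equiv.neg ℤ).tsum_eq g]
          exact tsum_congr fun a => by rw [Equiv.neg_apply]
        rw [hneg_sum]
    _ = ∑' a : ℤ, (q^8 : ℂ)^(a^2) * ((q^2)⁻¹)^a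
        - q * ∑' a : ℤ, (q^8 : ℂ)^(a^2) * ((q^6)⁻¹)^a := by
        rw [hg]; ring

end assembly

set_option maxHeartbeats 3200000 in
theorem theta_identity_j1 (q : ℂ) (hq : ‖q‖ < 1) :
    q * jac (-q ^ 2) (q ^ 16) - jac (-q ^ 6) (q ^ 16) =
      -(jac (q ^ 2) (q ^ 16) * jac (q ^ 4) (q ^ 16) * jac (q ^ 4) (q ^ 16) *
          jac (q ^ 6) (q ^ 16) * jac (q ^ 8) (q ^ 16) * Jm 1 q * Jm 16 q / Jm 2 q ^ 2) := by
  by_cases hq0 : q = 0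
  · subst hq0
    simp [jac, qpoch, Jm]
  -- main case
  have hqn : ∀ k : ℕ, k ≠ 0 → ‖q^k‖ < 1 := fun k hk => by
    rw [norm_pow]; exact pow_lt_one₀ (norm_nonneg q) hq hk
  have hne : ∀ k : ℕ, (q^k : ℂ) ≠ 0 := fun k => pow_ne_zero k hq0
  -- JTP instance 1 : z = (q^6)⁻¹, base q^8
  have ea1 : ((q^6)⁻¹ * q^8 : ℂ) = q^2 := by field_simp
  have eb1 : (((q^6)⁻¹)⁻¹ * q^8 : ℂ) = q^14 := by rw [inv_inv]; ring
  have JTP1 := JTP (q := q^8) (z := (q^6)⁻¹) (hqn 8 (by norm_num)) (hne 8)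
    (inv_ne_zero (hne 6)) (by rw [ea1]; exact hqn 2 (by norm_num))
    (by rw [eb1]; exact hqn 14 (by norm_num))
  rw [show ((q^8 : ℂ))^2 = q^16 by ring, ea1, eb1] at JTP1
  -- JTP instance 2 : z = (q^2)⁻¹, base q^8
  have ea2 : ((q^2)⁻¹ * q^8 : ℂ) = q^6 := by field_simp
  have eb2 : (((q^2)⁻¹)⁻¹ * q^8 : ℂ) = q^10 := by rw [inv_inv]; ring
  have JTP2 := JTP (q := q^8) (z := (q^2)⁻¹) (hqn 8 (by norm_num)) (hne 8)
    (inv_ne_zero (hne 2)) (by rw [ea2]; exact hqn 6 (by norm_num))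
    (by rw [eb2]; exact hqn 10 (by norm_num))
  rw [show ((q^8 : ℂ))^2 = q^16 by ring, ea2, eb2] at JTP2
  -- JTP instance 3 : z = -q⁻¹, base q^2
  have ea3 : ((-q⁻¹) * q^2 : ℂ) = -q := by field_simp
  have eb3 : (((-q⁻¹))⁻¹ * q^2 : ℂ) = -q^3 := by rw [inv_neg, inv_inv]; ring
  have JTP3 := JTP (q := q^2) (z := -q⁻¹) (hqn 2 (by norm_num)) (hne 2)
    (by simpa using inv_ne_zero hq0)
    (by rw [ea3, norm_neg]; exact hq)
    (by rw [eb3, norm_neg]; exact hqn 3 (by norm_num))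
  rw [show ((q^2 : ℂ))^2 = q^4 by ring, ea3, eb3, neg_neg, neg_neg] at JTP3
  -- the sum identity
  have EqA := parity_split hq hq0
  -- jac expansions
  have jacm2 : jac (-q^2) (q^16) = qpoch (-q^2) (q^16) * qpoch (-(q^14)) (q^16) := by
    rw [jac, show (q^16/(-q^2) : ℂ) = -(q^14) by
      rw [div_eq_iff (neg_ne_zero.mpr (hne 2))]; ring]
  have jacm6 : jac (-q^6) (q^16) = qpoch (-q^6) (q^16) * qpoch (-(q^10)) (q^16) := by
    rw [jac, show (q^16/(-q^6) : ℂ) = -(q^10) by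
      rw [div_eq_iff (neg_ne_zero.mpr (hne 6))]; ring]
  have jac2 : jac (q^2) (q^16) = qpoch (q^2) (q^16) * qpoch (q^14) (q^16) := by
    rw [jac, show (q^16/q^2 : ℂ) = q^14 by rw [div_eq_iff (hne 2)]; ring]
  have jac4 : jac (q^4) (q^16) = qpoch (q^4) (q^16) * qpoch (q^12) (q^16) := by
    rw [jac, show (q^16/q^4 : ℂ) = q^12 by rw [div_eq_iff (hne 4)]; ring]
  have jac6 : jac (q^6) (q^16) = qpoch (q^6) (q^16) * qpoch (q^10) (q^16) := by
    rw [jac, show (q^16/q^6 : ℂ) = q^10 by rw [div_eq_iff (hne 6)]; ring]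
  have jac8 : jac (q^8) (q^16) = qpoch (q^8) (q^16) * qpoch (q^8) (q^16) := by
    rw [jac, show (q^16/q^8 : ℂ) = q^8 by rw [div_eq_iff (hne 8)]; ring]
  -- splitting identities
  have I1 : qpoch q (q^2) = qpoch q (q^4) * qpoch (q^3) (q^4) := by
    have h := qpoch_split 2 two_ne_zero hq (hqn 2 (by norm_num))
    rw [prod_range_succ, prod_range_one] at h
    rw [h, show (q*(q^2)^0 : ℂ) = q by ring, show (q*(q^2)^1 : ℂ) = q^3 by ring,
      show ((q^2 : ℂ))^2 = q^4 by ring]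
  have I2 : Jm 1 q = qpoch q (q^2) * Jm 2 q := by
    have h := qpoch_split (a := q) (Q := q) 2 two_ne_zero hq hq
    rw [prod_range_succ, prod_range_one] at h
    rw [Jm, Jm, pow_one, h, show (q*q^0 : ℂ) = q by ring, show (q*q^1 : ℂ) = q^2 by ring]
  have I3 : Jm 2 q = qpoch (q^2) (q^4) * Jm 4 q := by
    have h := qpoch_split (a := q^2) (Q := q^2) 2 two_ne_zero (hqn 2 (by norm_num))
      (hqn 2 (by norm_num))
    rw [prod_range_succ, prod_range_one] at h
    rw [Jm, Jm, h, show (q^2*(q^2)^0 : ℂ) = q^2 by ring, show (q^2*(q^2)^1 : ℂ) = q^4 by ring,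
      show ((q^2 : ℂ))^2 = q^4 by ring]
  have I4 : Jm 4 q = qpoch (q^4) (q^8) * Jm 8 q := by
    have h := qpoch_split (a := q^4) (Q := q^4) 2 two_ne_zero (hqn 4 (by norm_num))
      (hqn 4 (by norm_num))
    rw [prod_range_succ, prod_range_one] at h
    rw [Jm, Jm, h, show (q^4*(q^4)^0 : ℂ) = q^4 by ring, show (q^4*(q^4)^1 : ℂ) = q^8 by ring,
      show ((q^4 : ℂ))^2 = q^8 by ring]
  have I5 : Jm 8 q = qpoch (q^8) (q^16) * Jm 16 q := by
    have h := qpoch_split (a := q^8) (Q := q^8) 2 two_ne_zero (hqn 8 (by norm_num))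
      (hqn 8 (by norm_num))
    rw [prod_range_succ, prod_range_one] at h
    rw [Jm, Jm, h, show (q^8*(q^8)^0 : ℂ) = q^8 by ring, show (q^8*(q^8)^1 : ℂ) = q^16 by ring,
      show ((q^8 : ℂ))^2 = q^16 by ring]
  have I6 : qpoch (q^2) (q^4)
      = qpoch (q^2) (q^16) * qpoch (q^6) (q^16) * qpoch (q^10) (q^16) * qpoch (q^14) (q^16) := by
    have h := qpoch_split (a := q^2) (Q := q^4) 4 four_ne_zero (hqn 2 (by norm_num))
      (hqn 4 (by norm_num))
    rw [prod_range_succ, prod_range_succ, prod_range_succ, prod_range_one] at h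
    rw [h, show (q^2*(q^4)^0 : ℂ) = q^2 by ring, show (q^2*(q^4)^1 : ℂ) = q^6 by ring,
      show (q^2*(q^4)^2 : ℂ) = q^10 by ring, show (q^2*(q^4)^3 : ℂ) = q^14 by ring,
      show ((q^4 : ℂ))^4 = q^16 by ring]
  have I7 : qpoch (q^4) (q^8) = qpoch (q^4) (q^16) * qpoch (q^12) (q^16) := by
    have h := qpoch_split (a := q^4) (Q := q^8) 2 two_ne_zero (hqn 4 (by norm_num))
      (hqn 8 (by norm_num))
    rw [prod_range_succ, prod_range_one] at h
    rw [h, show (q^4*(q^8)^0 : ℂ) = q^4 by ring, show (q^4*(q^8)^1 : ℂ) = q^12 by ring,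
      show ((q^8 : ℂ))^2 = q^16 by ring]
  -- nonvanishing
  have hK16 : Jm 16 q ≠ 0 := qpoch_ne_zero (hqn 16 (by norm_num)) (hqn 16 (by norm_num))
  have hJ2 : Jm 2 q ≠ 0 := qpoch_ne_zero (hqn 2 (by norm_num)) (hqn 2 (by norm_num))
  -- the key identity
  have key : Jm 16 q * (q * jac (-q^2) (q^16) - jac (-q^6) (q^16))
      = -(Jm 4 q * (qpoch q (q^4) * qpoch (q^3) (q^4))) := by
    have e1 : (∑' a : ℤ, (q^8 : ℂ)^(a^2) * ((q^6)⁻¹)^a)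
        = Jm 16 q * jac (-q^2) (q^16) := by rw [JTP1, jacm2, Jm]; ring
    have e2 : (∑' a : ℤ, (q^8 : ℂ)^(a^2) * ((q^2)⁻¹)^a)
        = Jm 16 q * jac (-q^6) (q^16) := by rw [JTP2, jacm6, Jm]; ring
    have e3 : (∑' m : ℤ, (q^2 : ℂ)^(m^2) * (-q⁻¹)^m)
        = Jm 4 q * (qpoch q (q^4) * qpoch (q^3) (q^4)) := by rw [JTP3, Jm]; ring
    linear_combination (-q) * e1 + e2 - e3 + EqA
  -- final assembly
  have hL : q * jac (-q^2) (q^16) - jac (-q^6) (q^16)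
      = -(Jm 4 q * (qpoch q (q^4) * qpoch (q^3) (q^4))) / Jm 16 q := by
    rw [eq_div_iff hK16]; linear_combination key
  rw [← neg_div, eq_div_iff (pow_ne_zero 2 hJ2), hL, div_mul_eq_mul_div, div_eq_iff hK16]
  rw [jac2, jac4, jac6, jac8, I2, I1, I3, I4, I5, I6, I7]
  ring
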